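/- arXiv:2003.00262 — 2 statements merged into one kernel-verified Lean document; each statement's English description precedes it below -/
import Mathlib

section
/- Lemma 1 (restriction to blocklengths that are integer multiples of r). Let S : ℕ → Ω → ℝ be a source with square-integrable coordinates and uniformly bounded variances, i.e., there exists C < ∞ with E[(S i)²] ≤ C for all i ∈ ℕ. Fix an integer r ≥ 1. Then a pair (R, D) of nonnegative reals is achievable for S if and only if it is r-block achievable for S. (In particular, the infimum of achievable rates at maximal distortion D is unchanged when only source codes whose blocklength is an integer multiple of r are allowed.) -/
open MeasureTheory Filter

/-- Rate of an `(l, M)` source code, in bits per source sample. -/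
noncomputable def codeRate (l M : ℕ) : ℝ := Real.logb 2 M / l

/-- Average MSE distortion of an `(l, M)` source code `(f, g)` applied to the source `S`. -/
noncomputable def codeDistortion {Ω : Type*} [MeasurableSpace Ω] (P : Measure Ω)
    (S : ℕ → Ω → ℝ) {l M : ℕ} (f : (Fin l → ℝ) → Fin M) (g : Fin M → Fin l → ℝ) : ℝ :=
  (1 / (l : ℝ)) * ∑ i : Fin l, ∫ ω, (S (i : ℕ) ω - g (f (fun j : Fin l => S (j : ℕ) ω)) i) ^ 2 ∂P

/-- A rate-distortion pair `(R, D)` is achievable for the source `S` if for every `η > 0`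
there is a blocklength `l₀` such that for every `l ≥ l₀` (with `l ≥ 1`) there exists an
`(l, M)` source code (measurable encoder `f`, decoder `g`, `M ≥ 1`) whose rate is at most
`R + η` and whose average MSE distortion on `S` is at most `D + η`. -/
def Achievable {Ω : Type*} [MeasurableSpace Ω] (P : Measure Ω)
    (S : ℕ → Ω → ℝ) (R D : ℝ) : Prop :=
  ∀ η : ℝ, 0 < η → ∃ l₀ : ℕ, ∀ l : ℕ, l₀ ≤ l → 1 ≤ l →
    ∃ (M : ℕ) (f : (Fin l → ℝ) → Fin M) (g : Fin M → Fin l → ℝ),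
      1 ≤ M ∧ Measurable f ∧
      codeRate l M ≤ R + η ∧ codeDistortion P S f g ≤ D + η

/-- `(R, D)` is `r`-block achievable for `S` if for every `η > 0` there is `b₀` such that for
every `b ≥ b₀` there exists a `(b·r, M)` source code with rate at most `R + η` and average MSE
distortion on `S` at most `D + η`. -/
def RBlockAchievable {Ω : Type*} [MeasurableSpace Ω] (P : Measure Ω)
    (S : ℕ → Ω → ℝ) (R D : ℝ) (r : ℕ) : Prop :=
  ∀ η : ℝ, 0 < η → ∃ b₀ : ℕ, ∀ b : ℕ, b₀ ≤ b → 1 ≤ b →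
    ∃ (M : ℕ) (f : (Fin (b * r) → ℝ) → Fin M) (g : Fin M → Fin (b * r) → ℝ),
      1 ≤ M ∧ Measurable f ∧
      codeRate (b * r) M ≤ R + η ∧ codeDistortion P S f g ≤ D + η

/-- **Lemma 1 (restriction to blocklengths that are integer multiples of `r`).**
For a source with square-integrable coordinates and uniformly bounded second moments,
a rate-distortion pair `(R, D)` is achievable if and only if it is `r`-block achievable. -/
theorem achievable_iff_rBlockAchievable {Ω : Type*} [MeasurableSpace Ω] (P : Measure Ω)
    [IsProbabilityMeasure P] (S : ℕ → Ω → ℝ)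
    (hmeas : ∀ i, Measurable (S i)) (hL2 : ∀ i, MemLp (S i) 2 P)
    (C : ℝ) (hC : ∀ i, ∫ ω, (S i ω) ^ 2 ∂P ≤ C)
    (r : ℕ) (hr : 1 ≤ r)
    (R D : ℝ) (hR : 0 ≤ R) (hD : 0 ≤ D) :
    Achievable P S R D ↔ RBlockAchievable P S R D r := by
  have hC0 : 0 ≤ C := le_trans (integral_nonneg fun ω => sq_nonneg _) (hC 0)
  constructor
  · -- easy direction
    intro h η hη
    obtain ⟨l₀, hl₀⟩ := h η hη
    refine ⟨l₀, fun b hb hb1 => ?_⟩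
    have hble : b ≤ b * r := by
      calc b = b * 1 := (mul_one b).symm
      _ ≤ b * r := Nat.mul_le_mul_left b hr
    exact hl₀ (b * r) (hb.trans hble) (le_trans hb1 hble)
  · -- hard direction
    intro h η hη
    obtain ⟨b₀, hb₀⟩ := h (η / 2) (by positivity)
    refine ⟨max ((b₀ + 1) * r) (⌈2 * r * C / η⌉₊ + 1), fun l hl hl1 => ?_⟩
    have hrl : (b₀ + 1) * r ≤ l := le_trans (le_max_left _ _) hl
    have hcl : ⌈2 * r * C / η⌉₊ + 1 ≤ l := le_trans (le_max_right _ _) hl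
    have hr0 : 0 < r := hr
    set b := l / r with hbdef
    have hmod : b * r + l % r = l := by
      rw [hbdef, mul_comm]; exact Nat.div_add_mod l r
    have hbrle : b * r ≤ l := by omega
    have hsr : l % r < r := Nat.mod_lt l hr0
    have hb1' : b₀ + 1 ≤ b := by
      rw [hbdef]
      exact (Nat.le_div_iff_mul_le hr0).2 hrl
    have hbge : b₀ ≤ b := by omega
    have hb1 : 1 ≤ b := by omega
    have hbr1 : 1 ≤ b * r := Nat.mul_le_mul hb1 hr
    obtain ⟨M, f, g, hM, hf, hrate, hdist⟩ := hb₀ b hbge hb1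
    refine ⟨M, fun x => f (fun j => x (Fin.castLE hbrle j)),
      fun m i => if h' : (i : ℕ) < b * r then g m ⟨i, h'⟩ else 0, hM,
      hf.comp (measurable_pi_lambda _ fun j => measurable_pi_apply _), ?_, ?_⟩
    · -- rate
      have hlogM : 0 ≤ Real.logb 2 M :=
        Real.logb_nonneg (by norm_num) (by exact_mod_cast hM)
      have hrr : codeRate l M ≤ codeRate (b * r) M := by
        unfold codeRate
        apply div_le_div_of_nonneg_left hlogM
        · exact_mod_cast hbr1
        · exact_mod_cast hbrle
      have : R + η / 2 ≤ R + η := by linarith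
      exact hrr.trans (hrate.trans this)
    · -- distortion
      set F : ℕ → ℝ := fun n => ∫ ω, (S n ω -
        (if h' : n < b * r then g (f fun j : Fin (b * r) => S (j : ℕ) ω) ⟨n, h'⟩ else 0)) ^ 2 ∂P
        with hF
      have heq : codeDistortion P S (fun x : Fin l → ℝ => f (fun j => x (Fin.castLE hbrle j)))
          (fun m i => if h' : (i : ℕ) < b * r then g m ⟨i, h'⟩ else 0)
          = (1 / (l : ℝ)) * ∑ i ∈ Finset.range l, F i := by
        unfold codeDistortion
        rw [← Fin.sum_univ_eq_sum_range F l]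
        rfl
      have hsplit : ∑ i ∈ Finset.range l, F i
          = ∑ i ∈ Finset.range (b * r), F i + ∑ i ∈ Finset.range (l % r), F (b * r + i) := by
        conv_lhs => rw [← hmod]
        exact Finset.sum_range_add F (b * r) (l % r)
      have hne : ((b * r : ℕ) : ℝ) ≠ 0 := Nat.cast_ne_zero.mpr (by omega)
      have h1 : ∑ i ∈ Finset.range (b * r), F i = ((b * r : ℕ) : ℝ) * codeDistortion P S f g := by
        have e : ∑ i ∈ Finset.range (b * r), F i
            = ∑ i : Fin (b * r), ∫ ω,
              (S (i : ℕ) ω - g (f fun j : Fin (b * r) => S (j : ℕ) ω) i) ^ 2 ∂P := by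
          rw [← Fin.sum_univ_eq_sum_range F (b * r)]
          refine Finset.sum_congr rfl fun i _ => ?_
          simp only [hF, dif_pos i.isLt, Fin.eta]
        rw [e]
        unfold codeDistortion
        field_simp
      have h2 : ∑ i ∈ Finset.range (l % r), F (b * r + i) ≤ ((l % r : ℕ) : ℝ) * C := by
        calc ∑ i ∈ Finset.range (l % r), F (b * r + i)
            ≤ ∑ _i ∈ Finset.range (l % r), C := by
              refine Finset.sum_le_sum fun i _ => ?_
              simp only [hF, dif_neg (by omega : ¬ (b * r + i < b * r)), sub_zero]
              exact hC _
          _ = ((l % r : ℕ) : ℝ) * C := by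
              rw [Finset.sum_const, nsmul_eq_mul, Finset.card_range]
      -- numeric bookkeeping
      have hL0 : (0 : ℝ) < (l : ℝ) := by exact_mod_cast hl1
      have hAL : ((b * r : ℕ) : ℝ) ≤ (l : ℝ) := by exact_mod_cast hbrle
      have hA0 : (0 : ℝ) ≤ ((b * r : ℕ) : ℝ) := by positivity
      have hsRr : ((l % r : ℕ) : ℝ) ≤ (r : ℝ) := by exact_mod_cast hsr.le
      have hη2 : (0 : ℝ) ≤ D + η / 2 := by linarith
      have h2rc : 2 * (r : ℝ) * C ≤ (l : ℝ) * η := by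
        have hceil : 2 * (r : ℝ) * C / η ≤ (⌈2 * (r : ℝ) * C / η⌉₊ : ℝ) := Nat.le_ceil _
        have hLge : (⌈2 * (r : ℝ) * C / η⌉₊ : ℝ) + 1 ≤ (l : ℝ) := by exact_mod_cast hcl
        have : 2 * (r : ℝ) * C / η ≤ (l : ℝ) := by linarith
        calc 2 * (r : ℝ) * C = (2 * (r : ℝ) * C / η) * η := by field_simp
          _ ≤ (l : ℝ) * η := by
              exact mul_le_mul_of_nonneg_right this hη.le
      have e1 : ((b * r : ℕ) : ℝ) * codeDistortion P S f g
            + ∑ i ∈ Finset.range (l % r), F (b * r + i)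
          ≤ (l : ℝ) * (D + η / 2) + (r : ℝ) * C := by
        have t1 : ((b * r : ℕ) : ℝ) * codeDistortion P S f g
            ≤ ((b * r : ℕ) : ℝ) * (D + η / 2) := mul_le_mul_of_nonneg_left hdist hA0
        have t2 : ((b * r : ℕ) : ℝ) * (D + η / 2) ≤ (l : ℝ) * (D + η / 2) :=
          mul_le_mul_of_nonneg_right hAL hη2
        have t3 : ((l % r : ℕ) : ℝ) * C ≤ (r : ℝ) * C :=
          mul_le_mul_of_nonneg_right hsRr hC0
        linarith
      have e2 : (1 / (l : ℝ)) * ((l : ℝ) * (D + η / 2) + (r : ℝ) * C)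
          = (D + η / 2) + (r : ℝ) * C / (l : ℝ) := by
        field_simp
      have e3 : (r : ℝ) * C / (l : ℝ) ≤ η / 2 := by
        rw [div_le_iff₀ hL0]
        nlinarith [h2rc]
      rw [heq, hsplit, h1]
      have : (1 / (l : ℝ)) * (((b * r : ℕ) : ℝ) * codeDistortion P S f g
            + ∑ i ∈ Finset.range (l % r), F (b * r + i))
          ≤ (1 / (l : ℝ)) * ((l : ℝ) * (D + η / 2) + (r : ℝ) * C) :=
        mul_le_mul_of_nonneg_left e1 (by positivity)
      rw [e2] at this
      linarith
end

section
/- Convergence of step-function thresholds (intermediate claim in the proof of Lemma C.2). Let (ζ_n)_{n∈ℕ} be a bounded sequence of real numbers and, for each n, define the step function G_n : ℝ → ℝ by G_n(β) = 1 if β ≥ ζ_n and G_n(β) = 0 otherwise. If for every β ∈ ℝ the limit lim_{n→∞} G_n(β) exists, then the sequence (ζ_n) converges to some ζ* ∈ ℝ; moreover lim_{n→∞} G_n(β) = 1 for every β > ζ*, lim_{n→∞} G_n(β) = 0 for every β < ζ*, and sInf {β ∈ ℝ : lim_{n→∞} G_n(β) = 1} = ζ*. -/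
open Filter Topology

/-- **Convergence of step-function thresholds (intermediate claim in the proof of Lemma C.2).**
Let `(ζ_n)` be a bounded real sequence and `G_n(β) = 1` if `β ≥ ζ_n`, `G_n(β) = 0` otherwise.
If `G_n(β)` converges for every `β`, then `ζ_n` converges to some `ζ*`, the limit of `G_n(β)`
is `1` for `β > ζ*` and `0` for `β < ζ*`, and `sInf {β | lim_n G_n(β) = 1} = ζ*`. -/
theorem step_function_threshold_convergence (ζ : ℕ → ℝ)
    (hbd : ∃ C : ℝ, ∀ n, |ζ n| ≤ C)
    (hconv : ∀ β : ℝ, ∃ L : ℝ,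
      Tendsto (fun n => if ζ n ≤ β then (1 : ℝ) else 0) atTop (𝓝 L)) :
    ∃ ζstar : ℝ, Tendsto ζ atTop (𝓝 ζstar) ∧
      (∀ β : ℝ, ζstar < β →
        Tendsto (fun n => if ζ n ≤ β then (1 : ℝ) else 0) atTop (𝓝 1)) ∧
      (∀ β : ℝ, β < ζstar →
        Tendsto (fun n => if ζ n ≤ β then (1 : ℝ) else 0) atTop (𝓝 0)) ∧
      sInf {β : ℝ |
        Tendsto (fun n => if ζ n ≤ β then (1 : ℝ) else 0) atTop (𝓝 1)} = ζstar := by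
  obtain ⟨C, hC⟩ := hbd
  -- dichotomy
  have dich : ∀ β : ℝ, (∀ᶠ n in atTop, ζ n ≤ β) ∨ (∀ᶠ n in atTop, β < ζ n) := by
    intro β
    obtain ⟨L, hL⟩ := hconv β
    have h2 : ∀ᶠ n in atTop, dist (if ζ n ≤ β then (1:ℝ) else 0) L < 1/2 :=
      hL (Metric.tendsto_nhds.1 tendsto_id (1/2) (by norm_num))
    by_cases hL2 : (1:ℝ)/2 ≤ L
    · left
      filter_upwards [h2] with n hn
      by_contra h
      rw [if_neg h] at hn
      rw [Real.dist_eq, abs_sub_comm, abs_sub_lt_iff] at hn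
      linarith [hn.1]
    · right
      filter_upwards [h2] with n hn
      by_contra h
      push_neg at h
      rw [if_pos h] at hn
      rw [Real.dist_eq, abs_sub_lt_iff] at hn
      push_neg at hL2
      linarith [hn.1]
  have tend1_iff : ∀ β : ℝ,
      Tendsto (fun n => if ζ n ≤ β then (1 : ℝ) else 0) atTop (𝓝 1) ↔
      (∀ᶠ n in atTop, ζ n ≤ β) := by
    intro β
    constructor
    · intro h
      have h2 : ∀ᶠ n in atTop, dist (if ζ n ≤ β then (1:ℝ) else 0) 1 < 1/2 :=
        h (Metric.tendsto_nhds.1 tendsto_id (1/2) (by norm_num))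
      filter_upwards [h2] with n hn
      by_contra hc
      rw [if_neg hc] at hn
      simp [Real.dist_eq] at hn
      linarith
    · intro h
      refine Tendsto.congr' ?_ tendsto_const_nhds
      filter_upwards [h] with n hn
      simp [hn]
  set S : Set ℝ := {β | ∀ᶠ n in atTop, ζ n ≤ β} with hS
  have hSne : S.Nonempty := ⟨C, Eventually.of_forall fun n => (abs_le.1 (hC n)).2⟩
  have hSbd : BddBelow S := by
    refine ⟨-C, fun β hβ => ?_⟩
    obtain ⟨n, hn⟩ := hβ.exists
    linarith [(abs_le.1 (hC n)).1]
  set z : ℝ := sInf S with hz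
  have hlt : ∀ a : ℝ, a < z → ∀ᶠ n in atTop, a < ζ n := by
    intro a ha
    rcases dich a with h | h
    · exact absurd (csInf_le hSbd h) (not_le.2 ha)
    · exact h
  have hgt : ∀ a : ℝ, z < a → ∀ᶠ n in atTop, ζ n ≤ a := by
    intro a ha
    obtain ⟨β, hβS, hβa⟩ := exists_lt_of_csInf_lt hSne ha
    filter_upwards [hβS] with n hn
    linarith
  refine ⟨z, ?_, ?_, ?_, ?_⟩
  · rw [Metric.tendsto_atTop]
    intro ε hε
    have h1 := hlt (z - ε/2) (by linarith)
    have h2 := hgt (z + ε/2) (by linarith)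
    obtain ⟨N, hN⟩ := (h1.and h2).exists_forall_of_atTop
    exact ⟨N, fun n hn => by
      obtain ⟨ha, hb⟩ := hN n hn
      rw [Real.dist_eq, abs_sub_lt_iff]; constructor <;> linarith⟩
  · intro β hβ
    exact (tend1_iff β).2 (hgt β hβ)
  · intro β hβ
    refine Tendsto.congr' ?_ tendsto_const_nhds
    filter_upwards [hlt β hβ] with n hn
    simp [not_le.2 hn]
  · have : {β : ℝ | Tendsto (fun n => if ζ n ≤ β then (1 : ℝ) else 0) atTop (𝓝 1)} = S := by
      ext β; exact tend1_iff β
    rw [this]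
end
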